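/- Fix α_{-k} ∈ [0,1] and define c_k = -(1/2)(g_{k,-k}^{(1)}/g_{k,k}^{(1)} + g_{k,-k}^{(2)}/g_{k,k}^{(2)}) and d_k = (g_{k,k}^{(1)}(1+g_{k,-k}^{(2)}) + g_{k,k}^{(2)}(g_{k,k}^{(1)}-1))/(2 g_{k,k}^{(1)} g_{k,k}^{(2)}). Then the unique maximizer over [0,1] of α_k ↦ u_k(α_k, α_{-k}) is α_k* = min(1, max(0, c_k α_{-k} + d_k)). -/

import Mathlib

open Real Set

/-- Utility of a player with direct gains `gk1 gk2`, cross gains `gi1 gi2`,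
own action `a`, opponent action `b`. -/
noncomputable def u (gk1 gk2 gi1 gi2 a b : ℝ) : ℝ :=
  Real.logb 2 (1 + a * gk1 / (1 + b * gi1)) +
  Real.logb 2 (1 + (1 - a) * gk2 / (1 + (1 - b) * gi2))

private lemma clamp_sq_le (t a : ℝ) (ha : a ∈ Set.Icc (0:ℝ) 1) :
    (min 1 (max 0 t) - t)^2 ≤ (a - t)^2 := by
  obtain ⟨ha0, ha1⟩ := ha
  rcases le_or_gt t 0 with ht | ht
  · rw [max_eq_left ht, min_eq_right zero_le_one]
    nlinarith
  rcases le_or_gt t 1 with ht1 | ht1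
  · rw [max_eq_right ht.le, min_eq_right ht1]
    nlinarith [sq_nonneg (a - t)]
  · rw [max_eq_right ht.le, min_eq_left ht1.le]
    nlinarith

private lemma clamp_sq_lt (t a : ℝ) (ha : a ∈ Set.Icc (0:ℝ) 1)
    (hne : a ≠ min 1 (max 0 t)) :
    (min 1 (max 0 t) - t)^2 < (a - t)^2 := by
  obtain ⟨ha0, ha1⟩ := ha
  rcases le_or_gt t 0 with ht | ht
  · rw [max_eq_left ht, min_eq_right zero_le_one] at *
    have : 0 < a := lt_of_le_of_ne ha0 (Ne.symm hne)
    nlinarith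
  rcases le_or_gt t 1 with ht1 | ht1
  · rw [max_eq_right ht.le, min_eq_right ht1] at *
    have h0 : a - t ≠ 0 := sub_ne_zero.mpr hne
    have h1 : 0 < (a - t)^2 := by positivity
    have h2 : (t - t)^2 = 0 := by ring
    linarith
  · rw [max_eq_right ht.le, min_eq_left ht1.le] at *
    have : a < 1 := lt_of_le_of_ne ha1 hne
    nlinarith

theorem pa_best_response
    (gk1 gk2 gi1 gi2 : ℝ)
    (hk1 : 0 < gk1) (hk2 : 0 < gk2) (hi1 : 0 < gi1) (hi2 : 0 < gi2)
    (b : ℝ) (hb : b ∈ Set.Icc (0 : ℝ) 1) :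
    let c : ℝ := -(1 / 2) * (gi1 / gk1 + gi2 / gk2)
    let d : ℝ := (gk1 * (1 + gi2) + gk2 * (gk1 - 1)) / (2 * gk1 * gk2)
    let astar : ℝ := min 1 (max 0 (c * b + d))
    astar ∈ Set.Icc (0 : ℝ) 1 ∧
    (∀ a ∈ Set.Icc (0 : ℝ) 1, u gk1 gk2 gi1 gi2 a b ≤ u gk1 gk2 gi1 gi2 astar b) ∧
    (∀ a ∈ Set.Icc (0 : ℝ) 1,
      (∀ a' ∈ Set.Icc (0 : ℝ) 1, u gk1 gk2 gi1 gi2 a' b ≤ u gk1 gk2 gi1 gi2 a b) →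
      a = astar) := by
  intro c d astar
  obtain ⟨hb0, hb1⟩ := hb
  set t : ℝ := c * b + d with ht_def
  have hC1 : 0 < 1 + b * gi1 := by nlinarith
  have hC2 : 0 < 1 + (1 - b) * gi2 := by nlinarith
  set C1 : ℝ := 1 + b * gi1
  set C2 : ℝ := 1 + (1 - b) * gi2
  -- the quadratic
  set g : ℝ → ℝ := fun a => (C1 + a * gk1) * (C2 + (1 - a) * gk2) with hg_def
  have hastar : astar ∈ Set.Icc (0:ℝ) 1 :=
    ⟨le_min zero_le_one (le_max_left 0 t), min_le_left _ _⟩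
  have hgpos : ∀ a ∈ Set.Icc (0:ℝ) 1, 0 < g a := by
    rintro a ⟨h0, h1⟩
    have : 0 < C1 + a * gk1 := by nlinarith
    have : 0 < C2 + (1 - a) * gk2 := by nlinarith
    exact mul_pos (by nlinarith) this
  -- u in terms of g
  have hu : ∀ a ∈ Set.Icc (0:ℝ) 1,
      u gk1 gk2 gi1 gi2 a b = Real.logb 2 (g a) - Real.logb 2 (C1 * C2) := by
    rintro a ⟨h0, h1⟩
    have hX1 : 0 < C1 + a * gk1 := by nlinarith
    have hX2 : 0 < C2 + (1 - a) * gk2 := by nlinarith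
    have e1 : 1 + a * gk1 / (1 + b * gi1) = (C1 + a * gk1) / C1 := by
      field_simp
      simp only [C1]; ring
    have e2 : 1 + (1 - a) * gk2 / (1 + (1 - b) * gi2) = (C2 + (1 - a) * gk2) / C2 := by
      field_simp
      simp only [C2]; ring
    rw [u, e1, e2, Real.logb_div hX1.ne' hC1.ne', Real.logb_div hX2.ne' hC2.ne',
      hg_def]
    rw [Real.logb_mul hX1.ne' hX2.ne', Real.logb_mul hC1.ne' hC2.ne']
    ring
  -- quadratic identity
  have hquad : ∀ a1 a2 : ℝ, g a2 - g a1 = gk1 * gk2 * ((a1 - t)^2 - (a2 - t)^2) := by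
    intro a1 a2
    show ((1 + b * gi1) + a2 * gk1) * ((1 + (1 - b) * gi2) + (1 - a2) * gk2) -
        ((1 + b * gi1) + a1 * gk1) * ((1 + (1 - b) * gi2) + (1 - a1) * gk2) =
        gk1 * gk2 * ((a1 - (-(1 / 2) * (gi1 / gk1 + gi2 / gk2) * b +
          (gk1 * (1 + gi2) + gk2 * (gk1 - 1)) / (2 * gk1 * gk2)))^2 -
        (a2 - (-(1 / 2) * (gi1 / gk1 + gi2 / gk2) * b +
          (gk1 * (1 + gi2) + gk2 * (gk1 - 1)) / (2 * gk1 * gk2)))^2)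
    field_simp
    ring
  have hmono : ∀ a1 ∈ Set.Icc (0:ℝ) 1, ∀ a2 ∈ Set.Icc (0:ℝ) 1,
      (a2 - t)^2 ≤ (a1 - t)^2 →
      u gk1 gk2 gi1 gi2 a1 b ≤ u gk1 gk2 gi1 gi2 a2 b := by
    intro a1 ha1 a2 ha2 hsq
    rw [hu a1 ha1, hu a2 ha2]
    have hle : g a1 ≤ g a2 := by nlinarith [hquad a1 a2, mul_pos hk1 hk2, hsq]
    have := Real.logb_le_logb_of_le (by norm_num : (1:ℝ) < 2) (hgpos a1 ha1) hle
    linarith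
  refine ⟨hastar, ?_, ?_⟩
  · intro a ha
    exact hmono a ha astar hastar (clamp_sq_le t a ha)
  · intro a ha hmax
    by_contra hne
    have hlt : (astar - t)^2 < (a - t)^2 := clamp_sq_lt t a ha hne
    have hglt : g a < g astar := by nlinarith [hquad a astar, mul_pos hk1 hk2, hlt]
    have : u gk1 gk2 gi1 gi2 a b < u gk1 gk2 gi1 gi2 astar b := by
      rw [hu a ha, hu astar hastar]
      have := Real.logb_lt_logb (b := 2) (by norm_num) (hgpos a ha) hglt
      linarith
    exact absurd (hmax astar hastar) (not_le.mpr this)
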